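/- arXiv:2006.05762 — 3 statements merged into one kernel-verified Lean document; each statement's English description precedes it below -/
import Mathlib

section
/- Let Ω ⊂ ℝ^d be open and bounded, z ∈ E(Ω), and w ∈ ℂ^d with Im(w) = t·Im(z) for some t ∈ [0,1] and dist(Re(w), Ωᶜ) + ε₁ < |Im(w)|. Then |Im(z) − Im(w)| ≤ |Re(z) − Re(w)| − ε₁. -/
open Complex Metric

/-- The real part of a point of `ℂ^d`, as a point of `ℝ^d`. -/
noncomputable def rePart {d : ℕ} (z : EuclideanSpace ℂ (Fin d)) :
    EuclideanSpace ℝ (Fin d) := WithLp.toLp 2 (fun j => (z j).re)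

/-- The imaginary part of a point of `ℂ^d`, as a point of `ℝ^d`. -/
noncomputable def imPart {d : ℕ} (z : EuclideanSpace ℂ (Fin d)) :
    EuclideanSpace ℝ (Fin d) := WithLp.toLp 2 (fun j => (z j).im)

/-- The set `E(Ω) = {z = x + iy : x ∈ Ω, |y| < dist(x, ∂Ω)}`. -/
noncomputable def ESet {d : ℕ} (Ω : Set (EuclideanSpace ℝ (Fin d))) :
    Set (EuclideanSpace ℂ (Fin d)) :=
  {z | rePart z ∈ Ω ∧ ‖imPart z‖ < infDist (rePart z) (frontier Ω)}

theorem stmt7 {d : ℕ} (Ω : Set (EuclideanSpace ℝ (Fin d)))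
    (hΩopen : IsOpen Ω) (hΩbdd : Bornology.IsBounded Ω)
    (z w : EuclideanSpace ℂ (Fin d)) (ε₁ : ℝ)
    (hz : z ∈ ESet Ω)
    (t : ℝ) (ht0 : 0 ≤ t) (ht1 : t ≤ 1) (htw : imPart w = t • imPart z)
    (hw : infDist (rePart w) Ωᶜ + ε₁ < ‖imPart w‖) :
    ‖imPart z - imPart w‖ ≤ ‖rePart z - rePart w‖ - ε₁ := by
  obtain ⟨hzΩ, hznorm⟩ := hz
  -- Ω ≠ univ
  by_cases huniv : Ω = Set.univ
  · exfalso
    rw [huniv] at hznorm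
    simp [frontier_univ, Metric.infDist_empty] at hznorm
    exact absurd hznorm (not_lt.2 (norm_nonneg _))
  -- norms of imaginary parts
  have him : ‖imPart z - imPart w‖ = ‖imPart z‖ - ‖imPart w‖ := by
    rw [htw]
    have h1 : imPart z - t • imPart z = (1 - t) • imPart z := by
      rw [sub_smul, one_smul]
    rw [h1, norm_smul, norm_smul, Real.norm_eq_abs, Real.norm_eq_abs,
      _root_.abs_of_nonneg (by linarith : (0:ℝ) ≤ 1 - t), _root_.abs_of_nonneg ht0]
    ring
  -- infDist to frontier ≤ infDist to complement at rePart z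
  obtain ⟨y, hyf, hyd⟩ := exists_mem_frontier_infDist_compl_eq_dist hzΩ huniv
  have h2 : infDist (rePart z) (frontier Ω) ≤ infDist (rePart z) Ωᶜ := by
    rw [hyd]
    exact infDist_le_dist_of_mem hyf
  have h3 : infDist (rePart z) Ωᶜ ≤ infDist (rePart w) Ωᶜ + dist (rePart z) (rePart w) :=
    infDist_le_infDist_add_dist
  have h4 : dist (rePart z) (rePart w) = ‖rePart z - rePart w‖ := dist_eq_norm _ _
  linarith
end

section
/- Let g ∈ L²(ℝ^d) with Fourier transform ĝ, and define u on ℝ × ℝ^d by its space-time Fourier transform û(τ, ξ) = 2ξ²/(ξ⁴ + τ²) · ĝ(ξ), where ξ² = |ξ|². If ĝ(ξ) = O(|ξ|²) near ξ = 0 and ĝ is bounded with compact support (or more generally (1+|ξ|)³ĝ ∈ L²), then (1+|ξ|)·û ∈ L²(ℝ^{1+d}) and (1+|τ|)^{1/2}·û ∈ L²(ℝ^{1+d}); hence u ∈ H^{1,1/2}(ℝ × ℝ^d) = L²(ℝ_t; H¹(ℝ^d)) ∩ H^{1/2}(ℝ_t; L²(ℝ^d)). -/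
open MeasureTheory Real
open scoped ENNReal NNReal

namespace Stmt10Aux

lemma inv_sq_add_eq (a : ℝ) (ha : a ≠ 0) (τ : ℝ) :
    (a ^ 2 + τ ^ 2)⁻¹ = a⁻¹ ^ 2 * (1 + (a⁻¹ * τ) ^ 2)⁻¹ := by
  field_simp

lemma integrable_inv_sq_add (a : ℝ) (ha : 0 < a) :
    Integrable (fun τ : ℝ => (a ^ 2 + τ ^ 2)⁻¹) := by
  simp_rw [inv_sq_add_eq a ha.ne']
  exact (integrable_inv_one_add_sq.comp_mul_left' (inv_ne_zero ha.ne')).const_mul _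

lemma integral_inv_sq_add (a : ℝ) (ha : 0 < a) :
    (∫ τ : ℝ, (a ^ 2 + τ ^ 2)⁻¹) = π / a := by
  simp_rw [inv_sq_add_eq a ha.ne']
  rw [integral_const_mul,
    Measure.integral_comp_inv_mul_left (fun y : ℝ => (1 + y ^ 2)⁻¹) a,
    integral_univ_inv_one_add_sq, abs_of_pos ha, smul_eq_mul]
  field_simp

lemma inner_bound {a c : ℝ} (ha : 0 < a) (F : ℝ → ℝ)
    (hFb : ∀ τ, F τ ≤ c * (a ^ 2 + τ ^ 2)⁻¹) (hc : 0 ≤ c) :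
    ∫⁻ τ : ℝ, ENNReal.ofReal (F τ) ≤ ENNReal.ofReal (c * (π / a)) := by
  calc ∫⁻ τ : ℝ, ENNReal.ofReal (F τ)
      ≤ ∫⁻ τ : ℝ, ENNReal.ofReal (c * (a ^ 2 + τ ^ 2)⁻¹) :=
        lintegral_mono fun τ => ENNReal.ofReal_le_ofReal (hFb τ)
    _ = ENNReal.ofReal (∫ τ : ℝ, c * (a ^ 2 + τ ^ 2)⁻¹) :=
        (ofReal_integral_eq_lintegral_ofReal ((integrable_inv_sq_add a ha).const_mul c)
          (Filter.Eventually.of_forall fun τ => by positivity)).symm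
    _ = ENNReal.ofReal (c * (π / a)) := by
        rw [integral_const_mul, integral_inv_sq_add a ha]

lemma master {d : ℕ} (ghat : EuclideanSpace ℝ (Fin d) → ℂ)
    (hmeas : Measurable ghat)
    (hg : MemLp (fun ξ => ((1 + ‖ξ‖) ^ 3 : ℝ) • ghat ξ) 2 volume)
    {C : ℝ} (hC : 0 ≤ C)
    (hvanish : ∀ ξ : EuclideanSpace ℝ (Fin d), ‖ξ‖ ≤ 1 → ‖ghat ξ‖ ≤ C * ‖ξ‖ ^ 2)
    (W : ℝ × EuclideanSpace ℝ (Fin d) → ℝ) (hWmeas : Measurable W)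
    {K : ℝ} (hK : 0 ≤ K)
    (hWb : ∀ (ξ : EuclideanSpace ℝ (Fin d)) (τ : ℝ), ξ ≠ 0 →
      (W (τ, ξ) * (2 * ‖ξ‖ ^ 2 / (‖ξ‖ ^ 4 + τ ^ 2))) ^ 2
        ≤ K * (1 + ‖ξ‖ ^ 2) * ((‖ξ‖ ^ 2) ^ 2 + τ ^ 2)⁻¹) :
    MemLp (fun p : ℝ × EuclideanSpace ℝ (Fin d) =>
      W p • ((2 * ‖p.2‖ ^ 2 / (‖p.2‖ ^ 4 + p.1 ^ 2) : ℝ) • ghat p.2)) 2 volume := by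
  classical
  have hmm : Measurable fun p : ℝ × EuclideanSpace ℝ (Fin d) => (2 * ‖p.2‖ ^ 2 / (‖p.2‖ ^ 4 + p.1 ^ 2) : ℝ) := by
    exact (measurable_const.mul ((measurable_norm.comp measurable_snd).pow_const 2)).div
      (((measurable_norm.comp measurable_snd).pow_const 4).add (measurable_fst.pow_const 2))
  have hfm : Measurable (fun p : ℝ × EuclideanSpace ℝ (Fin d) =>
      W p • ((2 * ‖p.2‖ ^ 2 / (‖p.2‖ ^ 4 + p.1 ^ 2) : ℝ) • ghat p.2)) :=
    hWmeas.smul (hmm.smul (hmeas.comp measurable_snd))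
  set f : ℝ × EuclideanSpace ℝ (Fin d) → ℂ := fun p =>
    W p • ((2 * ‖p.2‖ ^ 2 / (‖p.2‖ ^ 4 + p.1 ^ 2) : ℝ) • ghat p.2) with hf
  refine (memLp_two_iff_integrable_sq_norm hfm.aestronglyMeasurable).2
    ⟨(hfm.norm.pow_const 2).aestronglyMeasurable, ?_⟩
  rw [hasFiniteIntegral_iff_ofReal (Filter.Eventually.of_forall fun p => sq_nonneg _)]
  have hmeasI : Measurable fun p : ℝ × EuclideanSpace ℝ (Fin d) => ENNReal.ofReal (‖f p‖ ^ 2) :=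
    (hfm.norm.pow_const 2).ennreal_ofReal
  have key := lintegral_prod_symm' (μ := (volume : Measure ℝ)) (ν := (volume : Measure (EuclideanSpace ℝ (Fin d))))
    (fun p => ENNReal.ofReal (‖f p‖ ^ 2)) hmeasI
  rw [Measure.volume_eq_prod, key]
  -- the ξ-wise bound
  set Bnd : EuclideanSpace ℝ (Fin d) → ℝ≥0∞ := fun ξ =>
    ENNReal.ofReal (K * (1 + ‖ξ‖ ^ 2) * ‖ghat ξ‖ ^ 2 * (π / ‖ξ‖ ^ 2)) with hBnd
  have hinner : ∀ ξ : EuclideanSpace ℝ (Fin d), (∫⁻ τ : ℝ, ENNReal.ofReal (‖f (τ, ξ)‖ ^ 2)) ≤ Bnd ξ := by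
    intro ξ
    by_cases hξ : ξ = 0
    · subst hξ
      have h0 : ∀ τ : ℝ, ENNReal.ofReal (‖f (τ, (0 : EuclideanSpace ℝ (Fin d)))‖ ^ 2) = 0 := by
        intro τ
        simp [hf, norm_smul]
      simp only [h0, lintegral_zero]
      exact zero_le
    · have hx : 0 < ‖ξ‖ := norm_pos_iff.2 hξ
      have ha : 0 < ‖ξ‖ ^ 2 := by positivity
      have hnorm : ∀ τ : ℝ, ‖f (τ, ξ)‖ ^ 2
          = (W (τ, ξ) * (2 * ‖ξ‖ ^ 2 / (‖ξ‖ ^ 4 + τ ^ 2))) ^ 2 * ‖ghat ξ‖ ^ 2 := by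
        intro τ
        simp only [hf, norm_smul, Real.norm_eq_abs]
        rw [mul_pow, mul_pow, mul_pow, sq_abs, sq_abs]
        ring
      have hFb : ∀ τ : ℝ, ‖f (τ, ξ)‖ ^ 2
          ≤ (K * (1 + ‖ξ‖ ^ 2) * ‖ghat ξ‖ ^ 2) * ((‖ξ‖ ^ 2) ^ 2 + τ ^ 2)⁻¹ := by
        intro τ
        rw [hnorm τ]
        have := mul_le_mul_of_nonneg_right (hWb ξ τ hξ) (sq_nonneg ‖ghat ξ‖)
        calc (W (τ, ξ) * (2 * ‖ξ‖ ^ 2 / (‖ξ‖ ^ 4 + τ ^ 2))) ^ 2 * ‖ghat ξ‖ ^ 2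
            ≤ K * (1 + ‖ξ‖ ^ 2) * ((‖ξ‖ ^ 2) ^ 2 + τ ^ 2)⁻¹ * ‖ghat ξ‖ ^ 2 := this
          _ = (K * (1 + ‖ξ‖ ^ 2) * ‖ghat ξ‖ ^ 2) * ((‖ξ‖ ^ 2) ^ 2 + τ ^ 2)⁻¹ := by ring
      have hc : 0 ≤ K * (1 + ‖ξ‖ ^ 2) * ‖ghat ξ‖ ^ 2 := by positivity
      exact inner_bound ha _ hFb hc
  refine lt_of_le_of_lt (lintegral_mono hinner) ?_
  -- finiteness of the outer integral
  have hBmeas : Measurable Bnd := by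
    apply Measurable.ennreal_ofReal
    exact ((measurable_const.mul (measurable_const.add (measurable_norm.pow_const 2))).mul
      ((hmeas.norm).pow_const 2)).mul (measurable_const.div (measurable_norm.pow_const 2))
  have hs : MeasurableSet (Metric.closedBall (0 : EuclideanSpace ℝ (Fin d)) 1) := measurableSet_closedBall
  rw [← lintegral_add_compl Bnd hs]
  have hpart1 : (∫⁻ ξ in Metric.closedBall (0 : EuclideanSpace ℝ (Fin d)) 1, Bnd ξ) < ⊤ := by
    have hb : ∀ ξ ∈ Metric.closedBall (0 : EuclideanSpace ℝ (Fin d)) 1, Bnd ξ ≤ ENNReal.ofReal (2 * K * π * C ^ 2) := by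
      intro ξ hξ
      have hξ1 : ‖ξ‖ ≤ 1 := by simpa using Metric.mem_closedBall.1 hξ
      apply ENNReal.ofReal_le_ofReal
      by_cases hx0 : ‖ξ‖ = 0
      · rw [hx0]
        simp only [ne_eq, OfNat.ofNat_ne_zero, not_false_eq_true, zero_pow, div_zero, mul_zero]
        positivity
      · have hx : 0 < ‖ξ‖ := lt_of_le_of_ne (norm_nonneg ξ) (Ne.symm hx0)
        have hx2 : 0 < ‖ξ‖ ^ 2 := by positivity
        have h1 : ‖ghat ξ‖ ^ 2 ≤ C ^ 2 * ‖ξ‖ ^ 4 := by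
          have := hvanish ξ hξ1
          nlinarith [norm_nonneg (ghat ξ)]
        rw [← mul_div_assoc, div_le_iff₀ hx2]
        have hx2' : ‖ξ‖ ^ 2 ≤ 1 := by nlinarith
        have hx4 : ‖ξ‖ ^ 4 ≤ ‖ξ‖ ^ 2 := by nlinarith
        have h1' := mul_le_mul_of_nonneg_left h1 (show (0:ℝ) ≤ 1 + ‖ξ‖ ^ 2 by positivity)
        have h5 : (1 + ‖ξ‖ ^ 2) * ‖ghat ξ‖ ^ 2 ≤ 2 * C ^ 2 * ‖ξ‖ ^ 2 := by
          nlinarith [sq_nonneg C, mul_nonneg (sq_nonneg C) (sq_nonneg ‖ξ‖),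
            mul_nonneg (mul_nonneg (sq_nonneg C) (sq_nonneg ‖ξ‖)) (sq_nonneg ‖ξ‖)]
        calc K * (1 + ‖ξ‖ ^ 2) * ‖ghat ξ‖ ^ 2 * π
            = (K * π) * ((1 + ‖ξ‖ ^ 2) * ‖ghat ξ‖ ^ 2) := by ring
          _ ≤ (K * π) * (2 * C ^ 2 * ‖ξ‖ ^ 2) :=
              mul_le_mul_of_nonneg_left h5 (by positivity)
          _ = 2 * K * π * C ^ 2 * ‖ξ‖ ^ 2 := by ring
    calc (∫⁻ ξ in Metric.closedBall (0 : EuclideanSpace ℝ (Fin d)) 1, Bnd ξ)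
        ≤ ∫⁻ _ in Metric.closedBall (0 : EuclideanSpace ℝ (Fin d)) 1, ENNReal.ofReal (2 * K * π * C ^ 2) :=
          setLIntegral_mono measurable_const hb
      _ = ENNReal.ofReal (2 * K * π * C ^ 2) * volume (Metric.closedBall (0 : EuclideanSpace ℝ (Fin d)) 1) := by
          rw [setLIntegral_const]
      _ < ⊤ := ENNReal.mul_lt_top ENNReal.ofReal_lt_top measure_closedBall_lt_top
  have hG : Integrable (fun ξ : EuclideanSpace ℝ (Fin d) => ‖((1 + ‖ξ‖) ^ 3 : ℝ) • ghat ξ‖ ^ 2) volume :=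
    (memLp_two_iff_integrable_sq_norm hg.1).1 hg
  have hGfin : (∫⁻ ξ : EuclideanSpace ℝ (Fin d), ENNReal.ofReal (‖((1 + ‖ξ‖) ^ 3 : ℝ) • ghat ξ‖ ^ 2)) < ⊤ := by
    have := hG.2
    rwa [hasFiniteIntegral_iff_ofReal (Filter.Eventually.of_forall fun ξ => sq_nonneg _)] at this
  have hpart2 : (∫⁻ ξ in (Metric.closedBall (0 : EuclideanSpace ℝ (Fin d)) 1)ᶜ, Bnd ξ) < ⊤ := by
    have hb : ∀ ξ ∈ (Metric.closedBall (0 : EuclideanSpace ℝ (Fin d)) 1)ᶜ,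
        Bnd ξ ≤ ENNReal.ofReal (K * π) *
          ENNReal.ofReal (‖((1 + ‖ξ‖) ^ 3 : ℝ) • ghat ξ‖ ^ 2) := by
      intro ξ hξ
      have hx1 : 1 < ‖ξ‖ := by
        simp only [Set.mem_compl_iff, Metric.mem_closedBall, not_le, dist_zero_right] at hξ
        exact hξ
      have hx : 0 < ‖ξ‖ := lt_trans one_pos hx1
      rw [← ENNReal.ofReal_mul (by positivity)]
      apply ENNReal.ofReal_le_ofReal
      have hGnorm : ‖((1 + ‖ξ‖) ^ 3 : ℝ) • ghat ξ‖ = (1 + ‖ξ‖) ^ 3 * ‖ghat ξ‖ := by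
        rw [norm_smul, Real.norm_eq_abs, abs_of_nonneg (by positivity)]
      rw [hGnorm]
      have h2 : π / ‖ξ‖ ^ 2 ≤ π := by
        apply div_le_self Real.pi_pos.le
        nlinarith
      have h3 : 1 + ‖ξ‖ ^ 2 ≤ (1 + ‖ξ‖) ^ 6 := by
        have e1 : 1 + ‖ξ‖ ^ 2 ≤ (1 + ‖ξ‖) ^ 2 := by nlinarith [norm_nonneg ξ]
        have e2 : (1 + ‖ξ‖) ^ 2 ≤ (1 + ‖ξ‖) ^ 6 :=
          pow_le_pow_right₀ (by linarith [norm_nonneg ξ]) (by norm_num)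
        linarith
      have h4 : (1 + ‖ξ‖ ^ 2) * (π / ‖ξ‖ ^ 2) ≤ (1 + ‖ξ‖) ^ 6 * π := by
        apply mul_le_mul h3 h2 (by positivity) (by positivity)
      calc K * (1 + ‖ξ‖ ^ 2) * ‖ghat ξ‖ ^ 2 * (π / ‖ξ‖ ^ 2)
          = (K * ‖ghat ξ‖ ^ 2) * ((1 + ‖ξ‖ ^ 2) * (π / ‖ξ‖ ^ 2)) := by ring
        _ ≤ (K * ‖ghat ξ‖ ^ 2) * ((1 + ‖ξ‖) ^ 6 * π) :=
            mul_le_mul_of_nonneg_left h4 (by positivity)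
        _ = K * π * ((1 + ‖ξ‖) ^ 3 * ‖ghat ξ‖) ^ 2 := by ring
    calc (∫⁻ ξ in (Metric.closedBall (0 : EuclideanSpace ℝ (Fin d)) 1)ᶜ, Bnd ξ)
        ≤ ∫⁻ ξ in (Metric.closedBall (0 : EuclideanSpace ℝ (Fin d)) 1)ᶜ, ENNReal.ofReal (K * π) *
            ENNReal.ofReal (‖((1 + ‖ξ‖) ^ 3 : ℝ) • ghat ξ‖ ^ 2) := by
          have hGmeas : Measurable (fun ξ : EuclideanSpace ℝ (Fin d) =>
              ENNReal.ofReal (‖((1 + ‖ξ‖) ^ 3 : ℝ) • ghat ξ‖ ^ 2)) :=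
            ((((measurable_const.add measurable_norm).pow_const 3).smul
              hmeas).norm.pow_const 2).ennreal_ofReal
          exact setLIntegral_mono (measurable_const.mul hGmeas) hb
      _ ≤ ∫⁻ ξ : EuclideanSpace ℝ (Fin d), ENNReal.ofReal (K * π) *
            ENNReal.ofReal (‖((1 + ‖ξ‖) ^ 3 : ℝ) • ghat ξ‖ ^ 2) :=
          setLIntegral_le_lintegral _ _
      _ = ENNReal.ofReal (K * π) *
            ∫⁻ ξ : EuclideanSpace ℝ (Fin d), ENNReal.ofReal (‖((1 + ‖ξ‖) ^ 3 : ℝ) • ghat ξ‖ ^ 2) := by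
          exact lintegral_const_mul _ ((((measurable_const.add measurable_norm).pow_const 3).smul
            hmeas).norm.pow_const 2).ennreal_ofReal
      _ < ⊤ := ENNReal.mul_lt_top ENNReal.ofReal_lt_top hGfin
  exact ENNReal.add_lt_top.2 ⟨hpart1, hpart2⟩

lemma bound1 (x τ : ℝ) (hx : 0 < x) :
    ((1 + x) * (2 * x ^ 2 / (x ^ 4 + τ ^ 2))) ^ 2
      ≤ 8 * (1 + x ^ 2) * ((x ^ 2) ^ 2 + τ ^ 2)⁻¹ := by
  have hD : 0 < x ^ 4 + τ ^ 2 := by positivity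
  have hD' : (x ^ 2) ^ 2 + τ ^ 2 = x ^ 4 + τ ^ 2 := by ring
  rw [hD', ← div_eq_mul_inv, mul_div_assoc', div_pow,
    div_le_div_iff₀ (by positivity) hD]
  nlinarith [mul_nonneg hD.le (sq_nonneg τ), mul_nonneg hD.le (sq_nonneg (τ * x)),
    mul_nonneg hD.le (sq_nonneg (x ^ 2 * (1 - x)))]

lemma bound2 (x τ : ℝ) (hx : 0 < x) :
    (Real.sqrt (1 + |τ|) * (2 * x ^ 2 / (x ^ 4 + τ ^ 2))) ^ 2
      ≤ 4 * (1 + x ^ 2) * ((x ^ 2) ^ 2 + τ ^ 2)⁻¹ := by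
  have ht : (0 : ℝ) ≤ 1 + |τ| := by positivity
  rw [mul_pow, Real.sq_sqrt ht]
  have ht0 : 0 ≤ |τ| := abs_nonneg τ
  have ht2 : τ ^ 2 = |τ| ^ 2 := (sq_abs τ).symm
  rw [ht2]
  set t := |τ| with htdef
  have hD : 0 < x ^ 4 + t ^ 2 := by positivity
  have hD' : (x ^ 2) ^ 2 + t ^ 2 = x ^ 4 + t ^ 2 := by ring
  rw [hD', ← div_eq_mul_inv, div_pow, mul_div_assoc', div_le_div_iff₀ (by positivity) hD]
  nlinarith [mul_nonneg hD.le (sq_nonneg t), mul_nonneg hD.le (sq_nonneg (x * (x ^ 2 - t))),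
    mul_nonneg (mul_nonneg hD.le (pow_nonneg hx.le 4)) ht0]

end Stmt10Aux

open Stmt10Aux in
/-- Multiplier estimate for `û(τ,ξ) = 2ξ²/(ξ⁴+τ²) ĝ(ξ)`: membership in the anisotropic
space `H^{1,1/2}(ℝ × ℝ^d)`, expressed via weighted `L²` bounds on the Fourier side. -/
theorem stmt10 {d : ℕ} (hd : 1 ≤ d) (ghat : EuclideanSpace ℝ (Fin d) → ℂ)
    (hmeas : Measurable ghat)
    (hg : MemLp (fun ξ => ((1 + ‖ξ‖) ^ 3 : ℝ) • ghat ξ) 2 volume)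
    (hvanish : ∃ C : ℝ, ∀ ξ : EuclideanSpace ℝ (Fin d), ‖ξ‖ ≤ 1 → ‖ghat ξ‖ ≤ C * ‖ξ‖ ^ 2) :
    MemLp
      (fun p : ℝ × EuclideanSpace ℝ (Fin d) =>
        ((1 + ‖p.2‖ : ℝ)) • ((2 * ‖p.2‖ ^ 2 / (‖p.2‖ ^ 4 + p.1 ^ 2) : ℝ) • ghat p.2))
      2 volume ∧
    MemLp
      (fun p : ℝ × EuclideanSpace ℝ (Fin d) =>
        (Real.sqrt (1 + |p.1|)) • ((2 * ‖p.2‖ ^ 2 / (‖p.2‖ ^ 4 + p.1 ^ 2) : ℝ) • ghat p.2))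
      2 volume := by
  obtain ⟨C, hvan⟩ := hvanish
  have hC0 : 0 ≤ max C 0 := le_max_right _ _
  have hvan' : ∀ ξ : EuclideanSpace ℝ (Fin d), ‖ξ‖ ≤ 1 → ‖ghat ξ‖ ≤ max C 0 * ‖ξ‖ ^ 2 := by
    intro ξ hξ
    exact le_trans (hvan ξ hξ) (mul_le_mul_of_nonneg_right (le_max_left _ _) (sq_nonneg _))
  constructor
  · exact master ghat hmeas hg hC0 hvan' (fun p => 1 + ‖p.2‖)
      (measurable_const.add (measurable_norm.comp measurable_snd)) (by norm_num)
      (fun ξ τ hξ => bound1 ‖ξ‖ τ (norm_pos_iff.2 hξ))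
  · exact master ghat hmeas hg hC0 hvan' (fun p => Real.sqrt (1 + |p.1|))
      (Real.continuous_sqrt.measurable.comp (measurable_const.add measurable_fst.abs))
      (by norm_num)
      (fun ξ τ hξ => bound2 ‖ξ‖ τ (norm_pos_iff.2 hξ))
end

section
/- The exponential integral E₁(z) = ∫₁^∞ e^{−zt}/t dt satisfies, for Re(z) > 0, E₁(z) = −γ − log(z) − Σ_{k=1}^∞ (−z)^k/(k·k!), where γ is the Euler–Mascheroni constant and log is the principal branch; in particular E₁(z) + log(z) extends to an entire function of z. -/
open MeasureTheory Complex Set Filter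



noncomputable def Sint (z : ℂ) : ℂ := ∫ u in Set.Ioc (0:ℝ) 1, (Complex.exp (-z * u) - 1) / u

lemma norm_exp_sub_one_le' (w : ℂ) : ‖Complex.exp w - 1‖ ≤ ‖w‖ * Real.exp ‖w‖ := by
  have key := Convex.norm_image_sub_le_of_norm_hasDerivWithin_le
    (f := Complex.exp) (f' := Complex.exp) (C := Real.exp ‖w‖) (s := Metric.closedBall 0 ‖w‖)
    (fun x _ => (Complex.hasDerivAt_exp x).hasDerivWithinAt)
    (fun x hx => by
      rw [Complex.norm_exp]
      refine Real.exp_le_exp.2 (le_trans (Complex.re_le_norm x) ?_)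
      simpa using Metric.mem_closedBall.1 hx)
    (convex_closedBall _ _) (Metric.mem_closedBall_self (norm_nonneg w))
    (y := w) (by simp [Metric.mem_closedBall])
  simpa [Complex.exp_zero, mul_comm] using key

lemma norm_exp_neg_mul_real (z : ℂ) (u : ℝ) : ‖Complex.exp (-z * u)‖ = Real.exp (-z.re * u) := by
  rw [Complex.norm_exp]
  congr 1
  simp [Complex.mul_re]

lemma norm_coe_real (u : ℝ) (hu : 0 ≤ u) : ‖(u:ℂ)‖ = u := by
  rw [Complex.norm_real]; exact Real.norm_of_nonneg hu

lemma Sint_integrand_integrable (z : ℂ) :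
    IntegrableOn (fun u : ℝ => (Complex.exp (-z * u) - 1) / u) (Set.Ioc 0 1) := by
  have hmeas : AEStronglyMeasurable (fun u : ℝ => (Complex.exp (-z * u) - 1) / u)
      (volume.restrict (Set.Ioc (0:ℝ) 1)) := by
    apply ContinuousOn.aestronglyMeasurable ?_ measurableSet_Ioc
    apply ContinuousOn.div
    · fun_prop
    · fun_prop
    · intro x hx; exact_mod_cast ne_of_gt hx.1
  refine Integrable.mono' (g := fun _ : ℝ => ‖z‖ * Real.exp ‖z‖)
    (integrableOn_const (by simp)) hmeas ?_
  filter_upwards [ae_restrict_mem measurableSet_Ioc] with u hu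
  have hu0 : (0:ℝ) < u := hu.1
  have hu1 : u ≤ 1 := hu.2
  rw [norm_div, norm_coe_real u hu0.le, div_le_iff₀ hu0]
  calc ‖Complex.exp (-z * u) - 1‖ ≤ ‖-z * u‖ * Real.exp ‖-z * u‖ := norm_exp_sub_one_le' _
    _ ≤ (‖z‖ * u) * Real.exp ‖z‖ := by
        have h1 : ‖-z * (u:ℂ)‖ = ‖z‖ * u := by
          rw [norm_mul, norm_neg, norm_coe_real u hu0.le]
        rw [h1]
        gcongr
        nlinarith [norm_nonneg z]
    _ = ‖z‖ * Real.exp ‖z‖ * u := by ring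

lemma Sint_hasDerivAt (z₀ : ℂ) :
    HasDerivAt Sint (∫ u in Set.Ioc (0:ℝ) 1, -Complex.exp (-z₀ * u)) z₀ := by
  have hball : ∀ z ∈ Metric.ball z₀ 1, ∀ u ∈ Set.Ioc (0:ℝ) 1,
      ‖-(u:ℂ) * Complex.exp (-z * u) / u‖ ≤ Real.exp (‖z₀‖ + 1) := by
    intro z hz u hu
    have hu0 : (0:ℝ) < u := hu.1
    have hnorm : ‖-(u:ℂ) * Complex.exp (-z * u) / u‖ = ‖Complex.exp (-z * u)‖ := by
      rw [norm_div, norm_mul, norm_neg, norm_coe_real u hu0.le, mul_comm, mul_div_assoc,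
        div_self (ne_of_gt hu0), mul_one]
    rw [hnorm, norm_exp_neg_mul_real]
    apply Real.exp_le_exp.2
    have hz' : ‖z‖ ≤ ‖z₀‖ + 1 := by
      have h := mem_ball_iff_norm.1 hz
      calc ‖z‖ = ‖z₀ + (z - z₀)‖ := by ring_nf
        _ ≤ ‖z₀‖ + ‖z - z₀‖ := norm_add_le _ _
        _ ≤ ‖z₀‖ + 1 := by linarith
    have h1 : -z.re ≤ ‖z‖ := (neg_le_abs _).trans (Complex.abs_re_le_norm z)
    nlinarith [hu.1, hu.2, norm_nonneg z, norm_nonneg z₀]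
  have key := hasDerivAt_integral_of_dominated_loc_of_deriv_le (μ := volume.restrict (Set.Ioc (0:ℝ) 1))
    (F := fun z u => (Complex.exp (-z * u) - 1) / u)
    (F' := fun z u => -(u:ℂ) * Complex.exp (-z * u) / u)
    (x₀ := z₀) (bound := fun _ => Real.exp (‖z₀‖ + 1)) (Metric.ball_mem_nhds z₀ one_pos)
    (Filter.Eventually.of_forall fun z => (Sint_integrand_integrable z).aestronglyMeasurable)
    (Sint_integrand_integrable z₀)
    ?_ ?_ (integrableOn_const (by simp)) ?_
  · have heq : (∫ u in Set.Ioc (0:ℝ) 1, -(u:ℂ) * Complex.exp (-z₀ * u) / u)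
        = ∫ u in Set.Ioc (0:ℝ) 1, -Complex.exp (-z₀ * u) := by
      refine setIntegral_congr_fun measurableSet_Ioc fun u hu => ?_
      have hu0 : (u:ℂ) ≠ 0 := by exact_mod_cast ne_of_gt hu.1
      field_simp
    rw [heq] at key
    exact key.2
  · apply ContinuousOn.aestronglyMeasurable ?_ measurableSet_Ioc
    apply ContinuousOn.div
    · fun_prop
    · fun_prop
    · intro x hx; exact_mod_cast ne_of_gt hx.1
  · filter_upwards [ae_restrict_mem measurableSet_Ioc] with u hu z hz
    exact hball z hz u hu
  · filter_upwards [ae_restrict_mem measurableSet_Ioc] with u hu z _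
    have hd : HasDerivAt (fun z : ℂ => Complex.exp (-z * u)) (-(u:ℂ) * Complex.exp (-z * u)) z := by
      have h1 : HasDerivAt (fun z : ℂ => -z * u) (-(u:ℂ)) z := by
        simpa using ((hasDerivAt_id z).neg.mul_const (u:ℂ))
      simpa [mul_comm] using h1.cexp
    simpa [div_eq_mul_inv, sub_mul] using ((hd.sub_const 1).div_const (u:ℂ))



noncomputable def E1 (z : ℂ) : ℂ := ∫ t in Set.Ioi (1:ℝ), Complex.exp (-z * t) / t

-- integrability of exp(-z t) on Ioi 1 given re z > 0 (also with /t)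
lemma exp_decay_integrable {z : ℂ} (hz : 0 < z.re) :
    IntegrableOn (fun t : ℝ => Complex.exp (-z * t)) (Set.Ioi 1) := by
  refine Integrable.mono' (g := fun t : ℝ => Real.exp (-z.re * t))
    (exp_neg_integrableOn_Ioi 1 hz) ?_ ?_
  · apply Continuous.aestronglyMeasurable; fun_prop
  · filter_upwards with t
    rw [norm_exp_neg_mul_real]

lemma E1_integrand_integrable {z : ℂ} (hz : 0 < z.re) :
    IntegrableOn (fun t : ℝ => Complex.exp (-z * t) / t) (Set.Ioi 1) := by
  refine Integrable.mono' (g := fun t : ℝ => Real.exp (-z.re * t))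
    (exp_neg_integrableOn_Ioi 1 hz) ?_ ?_
  · apply ContinuousOn.aestronglyMeasurable ?_ measurableSet_Ioi
    apply ContinuousOn.div
    · fun_prop
    · fun_prop
    · intro x hx
      have : (0:ℝ) < x := lt_trans one_pos hx
      exact_mod_cast ne_of_gt this
  · filter_upwards [ae_restrict_mem measurableSet_Ioi] with t ht
    have ht1 : (1:ℝ) < t := ht
    rw [norm_div, norm_exp_neg_mul_real]
    have hnt : ‖(t:ℂ)‖ = t := by
      rw [Complex.norm_real]; exact Real.norm_of_nonneg (by linarith)
    rw [hnt, div_le_iff₀ (by linarith)]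
    nlinarith [Real.exp_pos (-z.re * t)]

-- antiderivative of exp(-z t) in t
lemma hasDerivAt_exp_neg_mul (z : ℂ) (hz : z ≠ 0) (t : ℝ) :
    HasDerivAt (fun t : ℝ => -Complex.exp (-z * t) / z) (Complex.exp (-z * t)) t := by
  have h1 : HasDerivAt (fun w : ℂ => -Complex.exp (-z * w) / z) (Complex.exp (-z * (t:ℂ))) (t:ℂ) := by
    have h2 : HasDerivAt (fun w : ℂ => -z * w) (-z) (t:ℂ) := by
      simpa using (hasDerivAt_id (t:ℂ)).const_mul (-z)
    have h3 := h2.cexp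
    have h4 := (h3.neg).div_const z
    exact h4.congr_deriv (by rw [mul_neg, neg_neg, mul_div_assoc, div_self hz, mul_one])
  exact h1.comp_ofReal

lemma integral_exp_neg_Ioi_one {z : ℂ} (hz : 0 < z.re) :
    ∫ t in Set.Ioi (1:ℝ), Complex.exp (-z * t) = Complex.exp (-z) / z := by
  have hz0 : z ≠ 0 := by intro h; rw [h] at hz; simp at hz
  have := integral_Ioi_of_hasDerivAt_of_tendsto (f := fun t : ℝ => -Complex.exp (-z * t) / z)
    (f' := fun t : ℝ => Complex.exp (-z * t)) (a := 1) (m := 0)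
    ((hasDerivAt_exp_neg_mul z hz0 1).continuousAt.continuousWithinAt)
    (fun x _ => hasDerivAt_exp_neg_mul z hz0 x) (exp_decay_integrable hz) ?_
  · rw [this]
    simp [neg_div]
  · rw [show (0:ℂ) = 0/z by simp]
    apply Filter.Tendsto.div_const
    rw [← neg_zero]
    apply Filter.Tendsto.neg
    rw [tendsto_zero_iff_norm_tendsto_zero]
    simp only [norm_exp_neg_mul_real]
    have h1 : Filter.Tendsto (fun t : ℝ => z.re * t) atTop atTop :=
      Filter.Tendsto.const_mul_atTop hz tendsto_id
    have h2 : Filter.Tendsto (fun t : ℝ => Real.exp (-(z.re * t))) atTop (nhds 0) :=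
      Real.tendsto_exp_neg_atTop_nhds_zero.comp h1
    refine h2.congr fun t => ?_
    rw [neg_mul]

lemma integral_exp_neg_Ioc_01 {z : ℂ} (hz : z ≠ 0) :
    ∫ u in Set.Ioc (0:ℝ) 1, -Complex.exp (-z * u) = (Complex.exp (-z) - 1) / z := by
  have h := intervalIntegral.integral_eq_sub_of_hasDerivAt
    (f := fun t : ℝ => -(-Complex.exp (-z * t) / z)) (f' := fun t : ℝ => -Complex.exp (-z * t))
    (a := 0) (b := 1)
    (fun x _ => (hasDerivAt_exp_neg_mul z hz x).neg)
    (Continuous.intervalIntegrable (by fun_prop) 0 1)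
  rw [← intervalIntegral.integral_of_le (by norm_num : (0:ℝ) ≤ 1), h]
  push_cast
  rw [mul_zero, mul_one, Complex.exp_zero]
  field_simp

lemma E1_hasDerivAt {z₀ : ℂ} (hz : 0 < z₀.re) :
    HasDerivAt E1 (-(Complex.exp (-z₀) / z₀)) z₀ := by
  set ε := z₀.re / 2 with hε
  have hε0 : 0 < ε := by positivity
  have hmeas : ∀ z : ℂ, 0 < z.re → AEStronglyMeasurable (fun t : ℝ => Complex.exp (-z * t) / t)
      (volume.restrict (Set.Ioi 1)) := fun z hz' => (E1_integrand_integrable hz').aestronglyMeasurable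
  have hre : ∀ z ∈ Metric.ball z₀ ε, ε ≤ z.re := by
    intro z hz'
    have h := mem_ball_iff_norm.1 hz'
    have h2 : |z.re - z₀.re| ≤ ‖z - z₀‖ := by
      simpa using Complex.abs_re_le_norm (z - z₀)
    have := abs_le.1 (le_of_lt (lt_of_le_of_lt h2 h))
    simp only [hε] at *
    linarith [this.1]
  have key := hasDerivAt_integral_of_dominated_loc_of_deriv_le (μ := volume.restrict (Set.Ioi (1:ℝ)))
    (F := fun z t => Complex.exp (-z * t) / t)
    (F' := fun z t => -(t:ℂ) * Complex.exp (-z * t) / t)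
    (x₀ := z₀) (bound := fun t => Real.exp (-ε * t)) (Metric.ball_mem_nhds z₀ hε0)
    ?_ (E1_integrand_integrable hz) ?_ ?_ (exp_neg_integrableOn_Ioi 1 hε0) ?_
  · have heq : (∫ t in Set.Ioi (1:ℝ), -(t:ℂ) * Complex.exp (-z₀ * t) / t)
        = ∫ t in Set.Ioi (1:ℝ), -Complex.exp (-z₀ * t) := by
      refine setIntegral_congr_fun measurableSet_Ioi fun t ht => ?_
      have ht0 : (t:ℂ) ≠ 0 := by
        have : (0:ℝ) < t := lt_trans one_pos ht
        exact_mod_cast ne_of_gt this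
      field_simp
    rw [heq] at key
    have key2 := key.2
    rw [integral_neg, integral_exp_neg_Ioi_one hz] at key2
    exact key2
  · filter_upwards [(Complex.continuous_re.isOpen_preimage _ isOpen_Ioi).mem_nhds
      (by simpa using hz)] with z hz'
    exact hmeas z hz'
  · apply ContinuousOn.aestronglyMeasurable ?_ measurableSet_Ioi
    apply ContinuousOn.div
    · fun_prop
    · fun_prop
    · intro x hx
      have : (0:ℝ) < x := lt_trans one_pos hx
      exact_mod_cast ne_of_gt this
  · filter_upwards [ae_restrict_mem measurableSet_Ioi] with t ht z hz'
    have ht1 : (1:ℝ) < t := ht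
    have ht0 : (0:ℝ) < t := lt_trans one_pos ht1
    have hnorm : ‖-(t:ℂ) * Complex.exp (-z * t) / t‖ = ‖Complex.exp (-z * t)‖ := by
      rw [norm_div, norm_mul, norm_neg]
      have hnt : ‖(t:ℂ)‖ = t := by
        rw [Complex.norm_real]; exact Real.norm_of_nonneg ht0.le
      rw [hnt, mul_comm, mul_div_assoc, div_self (ne_of_gt ht0), mul_one]
    rw [hnorm, norm_exp_neg_mul_real]
    apply Real.exp_le_exp.2
    have := hre z hz'
    nlinarith
  · filter_upwards [ae_restrict_mem measurableSet_Ioi] with t ht z _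
    have hd : HasDerivAt (fun z : ℂ => Complex.exp (-z * t)) (-(t:ℂ) * Complex.exp (-z * t)) z := by
      have h1 : HasDerivAt (fun z : ℂ => -z * t) (-(t:ℂ)) z := by
        simpa using ((hasDerivAt_id z).neg.mul_const (t:ℂ))
      simpa [mul_comm] using h1.cexp
    simpa [div_eq_mul_inv] using hd.div_const (t:ℂ)


-- (a) integrability pieces
lemma neg_log_le_rpow {t : ℝ} (ht : 0 < t) : -Real.log t ≤ 2 * t ^ (-(1/2) : ℝ) := by
  have h1 : Real.log (t ^ ((1:ℝ)/2)) = (1/2) * Real.log t := Real.log_rpow ht _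
  have h2 : 0 < t ^ ((1:ℝ)/2) := Real.rpow_pos_of_pos ht _
  have h3 : Real.log (t ^ ((1:ℝ)/2)) ≥ 1 - (t ^ ((1:ℝ)/2))⁻¹ := by
    have := Real.log_le_sub_one_of_pos (inv_pos.2 h2)
    rw [Real.log_inv] at this
    linarith
  have h4 : (t ^ ((1:ℝ)/2))⁻¹ = t ^ (-(1/2) : ℝ) := by
    rw [← Real.rpow_neg ht.le]
  rw [h4] at h3
  rw [h1] at h3
  have h5 : (0:ℝ) < t ^ (-(1/2) : ℝ) := Real.rpow_pos_of_pos ht _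
  nlinarith

lemma integrable_rpow_half : IntegrableOn (fun t : ℝ => 2 * t ^ (-(1/2) : ℝ)) (Set.Ioc 0 1) := by
  have h := intervalIntegral.intervalIntegrable_rpow' (a := 0) (b := 1) (r := -(1/2))
    (by norm_num)
  rw [intervalIntegrable_iff_integrableOn_Ioc_of_le (by norm_num)] at h
  exact h.const_mul 2

lemma integrable_log_exp_Ioc : IntegrableOn (fun t : ℝ => Real.log t * Real.exp (-t)) (Set.Ioc 0 1) := by
  refine Integrable.mono' integrable_rpow_half ?_ ?_
  · apply ContinuousOn.aestronglyMeasurable ?_ measurableSet_Ioc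
    apply ContinuousOn.mul
    · exact fun x hx => (Real.continuousAt_log (ne_of_gt hx.1)).continuousWithinAt
    · fun_prop
  · filter_upwards [ae_restrict_mem measurableSet_Ioc] with t ht
    have ht0 := ht.1
    have ht1 := ht.2
    have hlog : Real.log t ≤ 0 := Real.log_nonpos ht0.le ht1
    have hexp : Real.exp (-t) ≤ 1 := by
      rw [Real.exp_le_one_iff]; linarith
    have hexp0 : 0 < Real.exp (-t) := Real.exp_pos _
    rw [Real.norm_eq_abs, abs_mul, _root_.abs_of_nonneg hexp0.le, _root_.abs_of_nonpos hlog]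
    calc -Real.log t * Real.exp (-t) ≤ -Real.log t * 1 := by nlinarith
      _ = -Real.log t := by ring
      _ ≤ 2 * t ^ (-(1/2) : ℝ) := neg_log_le_rpow ht0

lemma integrable_log_exp_Ioi : IntegrableOn (fun t : ℝ => Real.log t * Real.exp (-t)) (Set.Ioi 1) := by
  have hG : IntegrableOn (fun x : ℝ => Real.exp (-x) * x ^ ((2:ℝ) - 1)) (Set.Ioi 0) :=
    Real.GammaIntegral_convergent (by norm_num)
  refine Integrable.mono' (hG.mono_set (Set.Ioi_subset_Ioi zero_le_one)) ?_ ?_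
  · apply ContinuousOn.aestronglyMeasurable ?_ measurableSet_Ioi
    apply ContinuousOn.mul
    · exact fun x hx => (Real.continuousAt_log (ne_of_gt (lt_trans one_pos hx))).continuousWithinAt
    · fun_prop
  · filter_upwards [ae_restrict_mem measurableSet_Ioi] with t ht
    have ht1 : (1:ℝ) < t := ht
    have ht0 : (0:ℝ) < t := lt_trans one_pos ht1
    have hlog0 : 0 ≤ Real.log t := Real.log_nonneg ht1.le
    have hlogt : Real.log t ≤ t := by
      have := Real.log_le_sub_one_of_pos ht0; linarith
    have hexp0 : 0 < Real.exp (-t) := Real.exp_pos _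
    rw [Real.norm_eq_abs, abs_mul, _root_.abs_of_nonneg hexp0.le, _root_.abs_of_nonneg hlog0]
    rw [show ((2:ℝ) - 1) = 1 by norm_num, Real.rpow_one]
    nlinarith

lemma integrable_one_sub_exp_div : IntegrableOn (fun t : ℝ => (1 - Real.exp (-t)) / t) (Set.Ioc 0 1) := by
  refine Integrable.mono' (g := fun _ : ℝ => (1:ℝ)) (integrableOn_const (by simp)) ?_ ?_
  · apply ContinuousOn.aestronglyMeasurable ?_ measurableSet_Ioc
    apply ContinuousOn.div
    · fun_prop
    · fun_prop
    · exact fun x hx => ne_of_gt hx.1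
  · filter_upwards [ae_restrict_mem measurableSet_Ioc] with t ht
    have ht0 := ht.1
    have h1 : Real.exp (-t) ≤ 1 := by rw [Real.exp_le_one_iff]; linarith
    have h2 : 1 - t ≤ Real.exp (-t) := by
      have := Real.add_one_le_exp (-t); linarith
    rw [Real.norm_eq_abs, abs_div, _root_.abs_of_nonneg (by linarith), _root_.abs_of_nonneg ht0.le,
      div_le_one ht0]
    linarith

lemma integrable_exp_div_Ioi : IntegrableOn (fun t : ℝ => Real.exp (-t) / t) (Set.Ioi 1) := by
  refine Integrable.mono' (g := fun t : ℝ => Real.exp (-1 * t))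
    (exp_neg_integrableOn_Ioi 1 one_pos) ?_ ?_
  · apply ContinuousOn.aestronglyMeasurable ?_ measurableSet_Ioi
    apply ContinuousOn.div
    · fun_prop
    · fun_prop
    · intro x hx; exact ne_of_gt (lt_trans one_pos hx)
  · filter_upwards [ae_restrict_mem measurableSet_Ioi] with t ht
    have ht1 : (1:ℝ) < t := ht
    have hexp0 : 0 < Real.exp (-t) := Real.exp_pos _
    rw [Real.norm_eq_abs, abs_div, _root_.abs_of_nonneg hexp0.le, _root_.abs_of_nonneg (by linarith : (0:ℝ) ≤ t),
      neg_one_mul, div_le_iff₀ (by linarith)]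
    nlinarith

-- (b) Gamma derivative: ∫_{Ioi 0} log t * exp (-t) = -γ
lemma integral_log_exp_eq_neg_gamma :
    ∫ t in Set.Ioi (0:ℝ), Real.log t * Real.exp (-t) = -Real.eulerMascheroniConstant := by
  have h1 := Complex.hasDerivAt_GammaIntegral (s := 1) (by norm_num)
  have h2 : Complex.Gamma =ᶠ[nhds (1:ℂ)] Complex.GammaIntegral := by
    filter_upwards [(Complex.continuous_re.isOpen_preimage _ isOpen_Ioi).mem_nhds
      (by norm_num : (1:ℂ) ∈ Complex.re ⁻¹' Set.Ioi 0)] with z hz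
    exact Complex.Gamma_eq_integral hz
  have h3 : HasDerivAt Complex.Gamma
      (∫ t : ℝ in Set.Ioi 0, (t:ℂ) ^ ((1:ℂ) - 1) * ((Real.log t : ℂ) * (Real.exp (-t) : ℂ))) 1 :=
    h1.congr_of_eventuallyEq h2
  have h4 := h3.unique Complex.hasDerivAt_Gamma_one
  have h5 : (∫ t : ℝ in Set.Ioi 0, (t:ℂ) ^ ((1:ℂ) - 1) * ((Real.log t : ℂ) * (Real.exp (-t) : ℂ)))
      = ∫ t : ℝ in Set.Ioi 0, ((Real.log t * Real.exp (-t) : ℝ) : ℂ) := by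
    refine setIntegral_congr_fun measurableSet_Ioi fun t ht => ?_
    rw [show ((1:ℂ) - 1) = 0 by ring, Complex.cpow_zero, one_mul]
    push_cast
    ring
  rw [h5] at h4
  have h6 := integral_ofReal (𝕜 := ℂ) (f := fun t => Real.log t * Real.exp (-t))
    (μ := volume.restrict (Set.Ioi 0))
  have h7 : ((∫ x in Set.Ioi (0:ℝ), Real.log x * Real.exp (-x) : ℝ) : ℂ)
      = ((-Real.eulerMascheroniConstant : ℝ) : ℂ) := by
    push_cast
    exact (h4.symm.trans h6).symm
  exact Complex.ofReal_inj.mp h7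

lemma ibp_Ioi : ∫ t in Set.Ioi (1:ℝ), Real.log t * Real.exp (-t)
    = ∫ t in Set.Ioi (1:ℝ), Real.exp (-t) / t := by
  have hderiv : ∀ t ∈ Set.Ioi (1:ℝ), HasDerivAt (fun t : ℝ => -Real.exp (-t) * Real.log t)
      (Real.log t * Real.exp (-t) - Real.exp (-t) / t) t := by
    intro t ht
    have ht0 : (0:ℝ) < t := lt_trans one_pos ht
    have h1 : HasDerivAt (fun t : ℝ => -Real.exp (-t)) (Real.exp (-t)) t := by
      exact (((Real.hasDerivAt_exp (-t)).comp t (hasDerivAt_neg t)).neg).congr_deriv (by ring)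
    have h2 := Real.hasDerivAt_log (ne_of_gt ht0)
    have h3 := h1.mul h2
    exact h3.congr_deriv (by rw [div_eq_mul_inv]; ring)
  have hcont : ContinuousWithinAt (fun t : ℝ => -Real.exp (-t) * Real.log t) (Set.Ici 1) 1 := by
    apply ContinuousAt.continuousWithinAt
    exact ((Real.continuous_exp.comp continuous_neg).continuousAt.neg).mul
      (Real.continuousAt_log one_ne_zero)
  have hint : IntegrableOn (fun t : ℝ => Real.log t * Real.exp (-t) - Real.exp (-t) / t)
      (Set.Ioi 1) := integrable_log_exp_Ioi.sub integrable_exp_div_Ioi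
  have htend : Filter.Tendsto (fun t : ℝ => -Real.exp (-t) * Real.log t) atTop (nhds 0) := by
    have hg := Real.tendsto_pow_mul_exp_neg_atTop_nhds_zero 1
    simp only [pow_one] at hg
    have hg' : Filter.Tendsto (fun x : ℝ => -(x * Real.exp (-x))) atTop (nhds 0) := by
      simpa using hg.neg
    apply tendsto_of_tendsto_of_tendsto_of_le_of_le' hg' hg
    · filter_upwards [Filter.eventually_ge_atTop (1:ℝ)] with t ht
      have ht0 : (0:ℝ) < t := lt_of_lt_of_le one_pos ht
      have hlog0 : 0 ≤ Real.log t := Real.log_nonneg ht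
      have hlogt : Real.log t ≤ t := by
        have := Real.log_le_sub_one_of_pos ht0; linarith
      have hexp0 : 0 < Real.exp (-t) := Real.exp_pos _
      nlinarith
    · filter_upwards [Filter.eventually_ge_atTop (1:ℝ)] with t ht
      have hlog0 : 0 ≤ Real.log t := Real.log_nonneg ht
      have hexp0 : 0 < Real.exp (-t) := Real.exp_pos _
      nlinarith
  have key := integral_Ioi_of_hasDerivAt_of_tendsto hcont hderiv hint htend
  rw [integral_sub integrable_log_exp_Ioi integrable_exp_div_Ioi] at key
  simp only [Real.log_one, mul_zero, sub_zero, neg_mul, zero_sub, neg_neg, mul_zero] at key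
  linarith [key]

lemma ibp_Ioc : ∫ t in Set.Ioc (0:ℝ) 1, Real.log t * Real.exp (-t)
    = -∫ t in Set.Ioc (0:ℝ) 1, (1 - Real.exp (-t)) / t := by
  set G : ℝ → ℝ := fun t => (1 - Real.exp (-t)) * Real.log t with hG
  set F : ℝ → ℝ := fun t => if t = 0 then 0 else G t with hF
  have hF0 : F 0 = 0 := by simp [hF]
  have hFeqG : ∀ t : ℝ, t ≠ 0 → F t = G t := fun t ht => by simp [hF, ht]
  have hGderiv : ∀ t : ℝ, t ≠ 0 → HasDerivAt G
      (Real.log t * Real.exp (-t) + (1 - Real.exp (-t)) / t) t := by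
    intro t ht
    have h1 : HasDerivAt (fun t : ℝ => 1 - Real.exp (-t)) (Real.exp (-t)) t := by
      simpa using (((Real.hasDerivAt_exp (-t)).comp t (hasDerivAt_neg t)).const_sub 1)
    have h2 := Real.hasDerivAt_log ht
    have h3 := h1.mul h2
    exact h3.congr_deriv (by rw [div_eq_mul_inv]; ring)
  have hFcont : ContinuousOn F (Set.Icc 0 1) := by
    intro x hx
    rcases eq_or_ne x 0 with rfl | hx0
    · rw [ContinuousWithinAt, hF0]
      have hmono : nhdsWithin (0:ℝ) (Set.Icc 0 1) ≤ nhdsWithin 0 (Set.Ici 0) :=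
        nhdsWithin_mono _ Set.Icc_subset_Ici_self
      apply Filter.Tendsto.mono_left ?_ hmono
      rw [show Set.Ici (0:ℝ) = insert 0 (Set.Ioi 0) by
        rw [Set.Ioi_insert]]
      rw [nhdsWithin_insert]
      rw [Filter.tendsto_sup]
      constructor
      · simpa [hF0] using tendsto_pure_nhds F 0
      · have hg : Filter.Tendsto (fun t : ℝ => |Real.log t * t|) (nhdsWithin 0 (Set.Ioi 0)) (nhds 0) := by
          have := tendsto_log_mul_rpow_nhdsGT_zero one_pos
          simp only [Real.rpow_one] at this
          simpa using this.abs
        apply squeeze_zero_norm' ?_ hg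
        filter_upwards [self_mem_nhdsWithin] with t ht
        have ht0 : (0:ℝ) < t := ht
        rw [hFeqG t (ne_of_gt ht0)]
        have h1 : Real.exp (-t) ≤ 1 := by rw [Real.exp_le_one_iff]; linarith
        have h2 : 1 - t ≤ Real.exp (-t) := by have := Real.add_one_le_exp (-t); linarith
        rw [hG]
        simp only [Real.norm_eq_abs]
        rw [_root_.abs_mul, _root_.abs_mul, _root_.abs_of_nonneg (by linarith : (0:ℝ) ≤ 1 - Real.exp (-t)),
          _root_.abs_of_nonneg ht0.le, mul_comm |Real.log t| t]
        exact mul_le_mul_of_nonneg_right (by linarith) (abs_nonneg _)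
    · have hcG : ContinuousAt G x := by
        exact (Real.continuous_exp.comp continuous_neg).continuousAt.const_sub 1 |>.mul
          (Real.continuousAt_log hx0)
      have : ContinuousAt F x := by
        apply hcG.congr
        filter_upwards [isOpen_ne.mem_nhds hx0] with t ht
        exact (hFeqG t ht).symm
      exact this.continuousWithinAt
  have hFderiv : ∀ t ∈ Set.Ioo (0:ℝ) 1, HasDerivWithinAt F
      (Real.log t * Real.exp (-t) + (1 - Real.exp (-t)) / t) (Set.Ioi t) t := by
    intro t ht
    have ht0 : t ≠ 0 := ne_of_gt ht.1
    have : HasDerivAt F (Real.log t * Real.exp (-t) + (1 - Real.exp (-t)) / t) t := by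
      apply (hGderiv t ht0).congr_of_eventuallyEq
      filter_upwards [isOpen_ne.mem_nhds ht0] with s hs
      exact hFeqG s hs
    exact this.hasDerivWithinAt
  have hint : IntervalIntegrable (fun t : ℝ => Real.log t * Real.exp (-t) + (1 - Real.exp (-t)) / t)
      volume 0 1 := by
    rw [intervalIntegrable_iff_integrableOn_Ioc_of_le zero_le_one]
    exact integrable_log_exp_Ioc.add integrable_one_sub_exp_div
  have key := intervalIntegral.integral_eq_sub_of_hasDeriv_right_of_le zero_le_one hFcont hFderiv hint
  rw [intervalIntegral.integral_of_le zero_le_one] at key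
  rw [integral_add integrable_log_exp_Ioc integrable_one_sub_exp_div] at key
  have hF1 : F 1 = 0 := by simp [hF, hG]
  rw [hF1, hF0, sub_zero] at key
  linarith [key]

lemma gamma_identity :
    (∫ u in Set.Ioc (0:ℝ) 1, (Real.exp (-u) - 1) / u) + (∫ t in Set.Ioi (1:ℝ), Real.exp (-t) / t)
      = -Real.eulerMascheroniConstant := by
  have hsplit : (∫ t in Set.Ioc (0:ℝ) 1, Real.log t * Real.exp (-t))
      + (∫ t in Set.Ioi (1:ℝ), Real.log t * Real.exp (-t))
      = ∫ t in Set.Ioi (0:ℝ), Real.log t * Real.exp (-t) := by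
    rw [← setIntegral_union (Set.Ioc_disjoint_Ioi le_rfl) measurableSet_Ioi
      integrable_log_exp_Ioc integrable_log_exp_Ioi]
    rw [Set.Ioc_union_Ioi_eq_Ioi zero_le_one]
  have hneg : (∫ u in Set.Ioc (0:ℝ) 1, (Real.exp (-u) - 1) / u)
      = -∫ u in Set.Ioc (0:ℝ) 1, (1 - Real.exp (-u)) / u := by
    rw [← integral_neg]
    refine setIntegral_congr_fun measurableSet_Ioc fun u _ => ?_
    ring
  rw [hneg, ← ibp_Ioc, ← ibp_Ioi, hsplit, integral_log_exp_eq_neg_gamma]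




lemma summable_exp_series (w : ℂ) : Summable (fun n : ℕ => w ^ n / (n.factorial : ℂ)) := by
  apply Summable.of_norm
  have h := Real.summable_pow_div_factorial ‖w‖
  refine h.congr fun n => ?_
  rw [norm_div, norm_pow]
  congr 1
  simp

lemma exp_sub_one_eq (w : ℂ) :
    Complex.exp w - 1 = ∑' k : ℕ, w ^ (k + 1) / ((k + 1).factorial : ℂ) := by
  have hexp : Complex.exp w = ∑' n : ℕ, w ^ n / (n.factorial : ℂ) := by
    rw [Complex.exp_eq_exp_ℂ, NormedSpace.exp_eq_tsum_div]
  have hsum := summable_exp_series w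
  rw [hexp, hsum.tsum_eq_zero_add]
  simp [Nat.factorial_zero]

lemma tsum_eq_Sint (z : ℂ) :
    (∑' k : ℕ, (-z) ^ (k + 1) / (((k:ℂ) + 1) * ((k + 1).factorial : ℂ))) = Sint z := by
  set f : ℕ → ℝ → ℂ := fun k u => (-z) ^ (k + 1) * ((u ^ k : ℝ) : ℂ) / ((k + 1).factorial : ℂ)
    with hf
  have hc : ∀ k : ℕ, (0:ℝ) ≤ ‖z‖ ^ (k+1) / ((k+1).factorial : ℝ) := fun k => by positivity
  have hcsum : Summable (fun k : ℕ => ‖z‖ ^ (k+1) / ((k+1).factorial : ℝ)) := by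
    have h := Real.summable_pow_div_factorial ‖z‖
    exact h.comp_injective (add_left_injective 1)
  have hmeas : ∀ k : ℕ, AEStronglyMeasurable (f k) (volume.restrict (Set.Ioc (0:ℝ) 1)) := by
    intro k
    apply Continuous.aestronglyMeasurable
    fun_prop
  have hbound : ∀ k : ℕ, ∀ u ∈ Set.Ioc (0:ℝ) 1,
      ‖f k u‖ ≤ ‖z‖ ^ (k+1) / ((k+1).factorial : ℝ) := by
    intro k u hu
    rw [hf]
    simp only
    rw [norm_div, norm_mul, norm_pow, norm_neg]
    have h1 : ‖((u ^ k : ℝ) : ℂ)‖ ≤ 1 := by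
      rw [Complex.norm_real, Real.norm_eq_abs, _root_.abs_of_nonneg (pow_nonneg hu.1.le k)]
      exact pow_le_one₀ hu.1.le hu.2
    have h2 : ‖(((k + 1).factorial : ℕ) : ℂ)‖ = ((k+1).factorial : ℝ) := by
      rw [Complex.norm_natCast]
    rw [h2]
    apply div_le_div_of_nonneg_right ?_ (by positivity)
    · calc ‖z‖ ^ (k+1) * ‖((u ^ k : ℝ) : ℂ)‖ ≤ ‖z‖ ^ (k+1) * 1 :=
        mul_le_mul_of_nonneg_left h1 (by positivity)
      _ = ‖z‖ ^ (k+1) := mul_one _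
  have hlint : ∑' k : ℕ, ∫⁻ u, ‖f k u‖₊ ∂(volume.restrict (Set.Ioc (0:ℝ) 1)) ≠ ⊤ := by
    have h1 : ∀ k : ℕ, ∫⁻ u, ‖f k u‖₊ ∂(volume.restrict (Set.Ioc (0:ℝ) 1))
        ≤ ENNReal.ofReal (‖z‖ ^ (k+1) / ((k+1).factorial : ℝ)) := by
      intro k
      have : ∫⁻ u, ‖f k u‖₊ ∂(volume.restrict (Set.Ioc (0:ℝ) 1))
          ≤ ∫⁻ _ in Set.Ioc (0:ℝ) 1, ENNReal.ofReal (‖z‖ ^ (k+1) / ((k+1).factorial : ℝ)) := by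
        apply lintegral_mono_ae
        filter_upwards [ae_restrict_mem measurableSet_Ioc] with u hu
        calc (‖f k u‖₊ : ENNReal) = ENNReal.ofReal ‖f k u‖ :=
              (ofReal_norm _).symm
          _ ≤ ENNReal.ofReal (‖z‖ ^ (k+1) / ((k+1).factorial : ℝ)) :=
              ENNReal.ofReal_le_ofReal (hbound k u hu)
      refine le_trans this ?_
      rw [setLIntegral_const]
      rw [Real.volume_Ioc]
      simp
    have hle : ∑' k : ℕ, ∫⁻ u, ‖f k u‖₊ ∂(volume.restrict (Set.Ioc (0:ℝ) 1))
        ≤ ENNReal.ofReal (∑' k : ℕ, ‖z‖ ^ (k+1) / ((k+1).factorial : ℝ)) := by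
      calc ∑' k : ℕ, ∫⁻ u, ‖f k u‖₊ ∂(volume.restrict (Set.Ioc (0:ℝ) 1))
          ≤ ∑' k : ℕ, ENNReal.ofReal (‖z‖ ^ (k+1) / ((k+1).factorial : ℝ)) :=
            ENNReal.tsum_le_tsum h1
        _ = ENNReal.ofReal (∑' k : ℕ, ‖z‖ ^ (k+1) / ((k+1).factorial : ℝ)) :=
            (ENNReal.ofReal_tsum_of_nonneg hc hcsum).symm
    exact ne_top_of_le_ne_top ENNReal.ofReal_ne_top hle
  have key := integral_tsum hmeas hlint
  -- LHS of key: ∫ ∑' f k u = Sint z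
  have hLHS : (∫ u in Set.Ioc (0:ℝ) 1, ∑' k : ℕ, f k u) = Sint z := by
    rw [Sint]
    refine setIntegral_congr_fun measurableSet_Ioc fun u hu => ?_
    have hu0 : (u:ℂ) ≠ 0 := by exact_mod_cast ne_of_gt hu.1
    have hterm : ∀ k : ℕ, f k u = ((-z * u) ^ (k+1) / ((k+1).factorial : ℂ)) / u := by
      intro k
      have h2 : ((-z * u) ^ (k+1) / (((k+1).factorial : ℕ) : ℂ)) / u
          = (-z) ^ (k+1) * ((u:ℂ) ^ (k+1) / u) / (((k+1).factorial : ℕ) : ℂ) := by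
        rw [mul_pow]; ring
      rw [hf]
      simp only
      rw [h2, pow_succ (u:ℂ) k, mul_div_cancel_right₀ _ hu0]
      push_cast
      ring
    calc ∑' k : ℕ, f k u = ∑' k : ℕ, ((-z * u) ^ (k+1) / ((k+1).factorial : ℂ)) / u :=
          tsum_congr hterm
      _ = (∑' k : ℕ, (-z * u) ^ (k+1) / ((k+1).factorial : ℂ)) / u := by
          rw [tsum_div_const]
      _ = (Complex.exp (-z * u) - 1) / u := by rw [← exp_sub_one_eq]
  -- RHS: each integral
  have hRHS : ∀ k : ℕ, (∫ u in Set.Ioc (0:ℝ) 1, f k u)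
      = (-z) ^ (k + 1) / (((k:ℂ) + 1) * ((k + 1).factorial : ℂ)) := by
    intro k
    rw [hf]
    simp only
    rw [integral_div]
    have hmul : (∫ u in Set.Ioc (0:ℝ) 1, (-z) ^ (k+1) * ((u ^ k : ℝ) : ℂ))
        = (-z) ^ (k+1) * ∫ u in Set.Ioc (0:ℝ) 1, ((u ^ k : ℝ) : ℂ) := by
      simpa [smul_eq_mul] using
        integral_smul (μ := volume.restrict (Set.Ioc (0:ℝ) 1)) ((-z) ^ (k+1))
          (fun u : ℝ => ((u ^ k : ℝ) : ℂ))
    rw [hmul, integral_complex_ofReal]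
    have hpow : (∫ u in Set.Ioc (0:ℝ) 1, u ^ k) = 1 / ((k:ℝ) + 1) := by
      rw [← intervalIntegral.integral_of_le zero_le_one, integral_pow]
      simp
    rw [hpow]
    have hk1 : ((k:ℂ) + 1) ≠ 0 := Nat.cast_add_one_ne_zero k
    have hfac : (((k+1).factorial : ℕ) : ℂ) ≠ 0 := by
      exact_mod_cast Nat.cast_ne_zero.mpr (Nat.factorial_ne_zero (k+1))
    push_cast
    field_simp
  rw [hLHS] at key
  rw [key]
  exact tsum_congr fun k => (hRHS k).symm


lemma h_deriv {z : ℂ} (hz : 0 < z.re) :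
    HasDerivAt (fun z => E1 z + Sint z + Complex.log z + (Real.eulerMascheroniConstant : ℂ)) 0 z := by
  have hz0 : z ≠ 0 := by intro h; rw [h] at hz; simp at hz
  have h1 := E1_hasDerivAt hz
  have h2 : HasDerivAt Sint ((Complex.exp (-z) - 1) / z) z := by
    have := Sint_hasDerivAt z
    rwa [integral_exp_neg_Ioc_01 hz0] at this
  have h3 : HasDerivAt Complex.log z⁻¹ z :=
    Complex.hasDerivAt_log (Complex.mem_slitPlane_iff.2 (Or.inl hz))
  have h4 := ((h1.add h2).add h3).add_const (Real.eulerMascheroniConstant : ℂ)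
  exact h4.congr_deriv (by ring)

lemma E1_one : E1 1 = ((∫ t in Set.Ioi (1:ℝ), Real.exp (-t) / t : ℝ) : ℂ) := by
  rw [E1, ← integral_complex_ofReal]
  refine setIntegral_congr_fun measurableSet_Ioi fun t _ => ?_
  push_cast
  rw [neg_one_mul]

lemma Sint_one : Sint 1 = ((∫ u in Set.Ioc (0:ℝ) 1, (Real.exp (-u) - 1) / u : ℝ) : ℂ) := by
  rw [Sint, ← integral_complex_ofReal]
  refine setIntegral_congr_fun measurableSet_Ioc fun u _ => ?_
  push_cast
  rw [neg_one_mul]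

lemma h_eq_zero {z : ℂ} (hz : 0 < z.re) :
    E1 z + Sint z + Complex.log z + (Real.eulerMascheroniConstant : ℂ) = 0 := by
  set g := fun z => E1 z + Sint z + Complex.log z + (Real.eulerMascheroniConstant : ℂ) with hg
  have hmem1 : (1:ℂ) ∈ {z : ℂ | 0 < z.re} := by simp
  have key := Convex.norm_image_sub_le_of_norm_hasDerivWithin_le (𝕜 := ℂ)
    (f := g) (f' := fun _ => (0:ℂ)) (C := 0) (s := {z : ℂ | 0 < z.re})
    (fun x hx => (h_deriv hx).hasDerivWithinAt) (fun x _ => by simp)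
    (convex_halfSpace_re_gt 0) hmem1 hz
  simp only [zero_mul] at key
  have hzz : g z = g 1 := by
    have := norm_sub_eq_zero_iff.1 (le_antisymm key (norm_nonneg _))
    exact this
  have hg1 : g 1 = 0 := by
    rw [hg]
    simp only
    rw [E1_one, Sint_one, Complex.log_one]
    have := gamma_identity
    rw [add_zero]
    norm_cast
    linarith
  exact hzz.trans hg1

/-- The series expansion `E₁(z) = -γ - log z - ∑_{k≥1} (-z)^k/(k·k!)` for `Re z > 0`,
and the fact that `E₁(z) + log z` extends to an entire function. -/
theorem stmt13 :
    (∀ z : ℂ, 0 < z.re →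
      (∫ t in Set.Ioi (1 : ℝ), Complex.exp (-z * t) / t) =
        -(Real.eulerMascheroniConstant : ℂ) - Complex.log z -
          ∑' k : ℕ, (-z) ^ (k + 1) / ((k + 1) * (Nat.factorial (k + 1)))) ∧
    ∃ f : ℂ → ℂ, Differentiable ℂ f ∧ ∀ z : ℂ, 0 < z.re →
      f z = (∫ t in Set.Ioi (1 : ℝ), Complex.exp (-z * t) / t) + Complex.log z := by
  constructor
  · intro z hz
    have h0 := h_eq_zero hz
    have ht := tsum_eq_Sint z
    show E1 z = _
    rw [ht]
    linear_combination h0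
  · refine ⟨fun z => -(Real.eulerMascheroniConstant : ℂ) - Sint z, ?_, ?_⟩
    · apply Differentiable.sub (differentiable_const _)
      intro z
      exact (Sint_hasDerivAt z).differentiableAt
    · intro z hz
      have h0 := h_eq_zero hz
      show _ = E1 z + Complex.log z
      linear_combination -h0
end
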